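/- Biased matrix multiplication sketch (expectation bound): Let X ∈ ℂ^{m×n}, Y ∈ ℂ^{m×n'} be nonzero matrices, ε ∈ [0,1], φ ≥ 1, and define Γ = {j ∈ {1,…,m} : ‖Y(j,·)‖ ≥ (‖Y‖_F/(√(2φε)‖X‖_F))·‖X(j,·)‖}. Let Σ be an (r, ε, φ)-approximate importance matrix sketch of X and let Σ̄ be obtained by zeroing each row i of Σ whose sampled index s_i lies in Γ. Then ‖E[X† Σ̄† Σ̄ Y] − X† Y‖_F ≤ 2√(2φε)·‖X‖_F·‖Y‖_F. -/

import Mathlib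

open Finset Matrix ComplexConjugate

/-- Euclidean norm of row `i` of a matrix. -/
noncomputable def rowNorm {m n : ℕ} (A : Matrix (Fin m) (Fin n) ℂ) (i : Fin m) : ℝ :=
  Real.sqrt (∑ j, ‖A i j‖ ^ 2)

/-- Frobenius norm of a matrix. -/
noncomputable def frobNorm {m n : ℕ} (A : Matrix (Fin m) (Fin n) ℂ) : ℝ :=
  Real.sqrt (∑ i, ∑ j, ‖A i j‖ ^ 2)

/-- The truncated sketch matrix: row `i` equals `e_{s i}/√(r·p(s i))` when `p (s i) > 0` and
the sampled index `s i` does not lie in the truncation set `Γ`, and is zero otherwise. -/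
noncomputable def truncSketch {m : ℕ} (r : ℕ) (p : Fin m → ℝ) (Γ : Fin m → Prop)
    [DecidablePred Γ] (s : Fin r → Fin m) : Matrix (Fin r) (Fin m) ℂ :=
  Matrix.of fun i j =>
    if j = s i ∧ 0 < p (s i) ∧ ¬ Γ (s i) then ((1 / Real.sqrt (r * p (s i)) : ℝ) : ℂ) else 0

section Aux
variable {m n n' : ℕ}

lemma rowNorm_nonneg' (A : Matrix (Fin m) (Fin n) ℂ) (i : Fin m) : 0 ≤ rowNorm A i :=
  Real.sqrt_nonneg _

lemma frobNorm_nonneg' (A : Matrix (Fin m) (Fin n) ℂ) : 0 ≤ frobNorm A :=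
  Real.sqrt_nonneg _

lemma rowNorm_sq_eq (A : Matrix (Fin m) (Fin n) ℂ) (i : Fin m) :
    rowNorm A i ^ 2 = ∑ j, ‖A i j‖ ^ 2 :=
  Real.sq_sqrt (by positivity)

lemma frobNorm_sq_eq (A : Matrix (Fin m) (Fin n) ℂ) :
    frobNorm A ^ 2 = ∑ i, ∑ j, ‖A i j‖ ^ 2 :=
  Real.sq_sqrt (by positivity)

lemma frobNorm_pos (A : Matrix (Fin m) (Fin n) ℂ) (hA : A ≠ 0) : 0 < frobNorm A := by
  obtain ⟨i, j, hij⟩ : ∃ i j, A i j ≠ 0 := by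
    by_contra h; push_neg at h; exact hA (by ext i j; simpa using h i j)
  apply Real.sqrt_pos.mpr
  calc (0:ℝ) < ‖A i j‖ ^ 2 := by
        have := norm_pos_iff.mpr hij; positivity
    _ ≤ ∑ j', ‖A i j'‖ ^ 2 :=
        Finset.single_le_sum (f := fun j' => ‖A i j'‖ ^ 2)
          (fun _ _ => by positivity) (Finset.mem_univ j)
    _ ≤ ∑ i', ∑ j', ‖A i' j'‖ ^ 2 :=
        Finset.single_le_sum (f := fun i' => ∑ j', ‖A i' j'‖ ^ 2)
          (fun _ _ => by positivity) (Finset.mem_univ i)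

/-- entrywise embedding of matrices into Euclidean space -/
noncomputable def embL (n n' : ℕ) :
    Matrix (Fin n) (Fin n') ℂ →ₗ[ℂ] EuclideanSpace ℂ (Fin n × Fin n') where
  toFun A := WithLp.toLp 2 (fun ab : Fin n × Fin n' => A ab.1 ab.2)
  map_add' A B := rfl
  map_smul' c A := rfl

lemma frobNorm_eq_norm_embL (A : Matrix (Fin n) (Fin n') ℂ) :
    frobNorm A = ‖embL n n' A‖ := by
  rw [EuclideanSpace.norm_eq]
  unfold frobNorm
  congr 1
  rw [Fintype.sum_prod_type]
  rfl

lemma frobNorm_rank_one (c : ℝ) (u : Fin n → ℂ) (v : Fin n' → ℂ) :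
    frobNorm (Matrix.of fun a b => (c : ℂ) * u a * v b)
      = |c| * Real.sqrt (∑ a, ‖u a‖ ^ 2) * Real.sqrt (∑ b, ‖v b‖ ^ 2) := by
  unfold frobNorm
  have h : ∀ a b, ‖(c : ℂ) * u a * v b‖ ^ 2 = c ^ 2 * (‖u a‖ ^ 2 * ‖v b‖ ^ 2) := by
    intro a b
    rw [norm_mul, norm_mul, Complex.norm_real, mul_pow, mul_pow, Real.norm_eq_abs, sq_abs]
    ring
  simp_rw [Matrix.of_apply, h]
  have h2 : (∑ a, ∑ b, c ^ 2 * (‖u a‖ ^ 2 * ‖v b‖ ^ 2))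
      = c ^ 2 * ((∑ a, ‖u a‖ ^ 2) * (∑ b, ‖v b‖ ^ 2)) := by
    rw [Finset.sum_mul_sum, Finset.mul_sum]
    exact Finset.sum_congr rfl fun a _ => by rw [Finset.mul_sum]
  rw [h2, Real.sqrt_mul (sq_nonneg c), Real.sqrt_sq_eq_abs,
    Real.sqrt_mul (by positivity), mul_assoc]

lemma marg {m : ℕ} (r : ℕ) (w : Fin m → ℂ) (hw : ∑ j, w j = 1) (g : Fin m → ℂ) (i₀ : Fin r) :
    ∑ s : Fin r → Fin m, (∏ i, w (s i)) * g (s i₀) = ∑ j, w j * g j := by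
  have key : ∀ s : Fin r → Fin m, (∏ i, w (s i)) * g (s i₀)
      = ∏ i, (if i = i₀ then w (s i) * g (s i) else w (s i)) := by
    intro s
    have h1 : (∏ i, (if i = i₀ then w (s i) * g (s i) else w (s i)))
        = (∏ i, w (s i)) * ∏ i, (if i = i₀ then g (s i) else 1) := by
      rw [← Finset.prod_mul_distrib]
      exact Finset.prod_congr rfl (fun i _ => by split <;> ring)
    rw [h1, Finset.prod_ite_eq' Finset.univ i₀ (fun i => g (s i))]
    simp
  simp_rw [key]
  rw [← Fintype.prod_sum (fun (i : Fin r) (j : Fin m) => if i = i₀ then w j * g j else w j)]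
  have h2 : ∀ i : Fin r, (∑ j, if i = i₀ then w j * g j else w j)
      = if i = i₀ then ∑ j, w j * g j else 1 := by
    intro i; split <;> simp [hw]
  simp_rw [h2]
  rw [Finset.prod_ite_eq' Finset.univ i₀ (fun _ => ∑ j, w j * g j)]
  simp

end Aux

set_option maxHeartbeats 1000000 in
/-- **Biased matrix multiplication sketch: expectation bound.**
Let `X ∈ ℂ^{m×n}`, `Y ∈ ℂ^{m×n'}` be nonzero, `ε ∈ [0,1]`, `φ ≥ 1`, and
`Γ = {j : ‖Y(j,·)‖ ≥ (‖Y‖_F/(√(2φε)‖X‖_F))·‖X(j,·)‖}` (written multiplied out).  Let `Σ`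
be an `(r,ε,φ)`-approximate importance sketch of `X` (samples i.i.d. from `p̃` with
`‖p̃−p‖_TV ≤ ε` and `p(j) ≥ (1/φ)‖X(j,·)‖²/‖X‖_F²`) and `Σ̄` the sketch with the rows whose
sampled index lies in `Γ` zeroed out.  Then
`‖E[X† Σ̄† Σ̄ Y] − X† Y‖_F ≤ 2√(2φε)·‖X‖_F·‖Y‖_F`. -/
theorem biased_matrix_mult_sketch_expectation
    (m n n' r : ℕ) (hr : 1 ≤ r)
    (X : Matrix (Fin m) (Fin n) ℂ) (Y : Matrix (Fin m) (Fin n') ℂ)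
    (hX : X ≠ 0) (hY : Y ≠ 0)
    (ε : ℝ) (hε : ε ∈ Set.Icc (0:ℝ) 1) (φ : ℝ) (hφ : 1 ≤ φ)
    (p ptilde : Fin m → ℝ)
    (hp_nonneg : ∀ j, 0 ≤ p j) (hp_sum : ∑ j, p j = 1)
    (hpt_nonneg : ∀ j, 0 ≤ ptilde j) (hpt_sum : ∑ j, ptilde j = 1)
    (hp_over : ∀ j, (1 / φ) * (rowNorm X j ^ 2 / frobNorm X ^ 2) ≤ p j)
    (hTV : (1/2) * ∑ j, |ptilde j - p j| ≤ ε)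
    (Γ : Fin m → Prop) [DecidablePred Γ]
    (hΓ : ∀ j, Γ j ↔ frobNorm Y * rowNorm X j ≤ Real.sqrt (2 * φ * ε) * frobNorm X * rowNorm Y j) :
    frobNorm
      ((∑ s : Fin r → Fin m, ((∏ i, ptilde (s i) : ℝ) : ℂ) •
          (Xᴴ * (truncSketch r p Γ s)ᴴ * (truncSketch r p Γ s * Y)))
        - Xᴴ * Y)
      ≤ 2 * Real.sqrt (2 * φ * ε) * frobNorm X * frobNorm Y := by
  classical
  have hφ0 : (0:ℝ) < φ := lt_of_lt_of_le one_pos hφ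
  have hε0 : (0:ℝ) ≤ ε := hε.1
  set K := Real.sqrt (2 * φ * ε) with hK
  have hK0 : 0 ≤ K := Real.sqrt_nonneg _
  set fX := frobNorm X with hfXdef
  set fY := frobNorm Y with hfYdef
  have hfX : 0 < fX := frobNorm_pos X hX
  have hfY : 0 < fY := frobNorm_pos Y hY
  set c : Fin m → ℝ := fun j => (if 0 < p j ∧ ¬ Γ j then ptilde j / p j else 0) - 1 with hc
  -- Step 1: matrix identity
  have hmat : (∑ s : Fin r → Fin m, ((∏ i, ptilde (s i) : ℝ) : ℂ) •
          (Xᴴ * (truncSketch r p Γ s)ᴴ * (truncSketch r p Γ s * Y)))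
        - Xᴴ * Y
      = Matrix.of (fun a b => ∑ j, ((c j : ℝ) : ℂ) * (conj (X j a)) * Y j b) := by
    ext a b
    have hr0 : ((r:ℂ)) ≠ 0 := by
      exact_mod_cast Nat.cast_ne_zero.mpr (Nat.one_le_iff_ne_zero.mp hr)
    set g : Fin m → ℂ := fun j => if 0 < p j ∧ ¬ Γ j
        then ((((r:ℝ) * p j)⁻¹ : ℝ) : ℂ) * conj (X j a) * Y j b else 0 with hg
    have hentry : ∀ s : Fin r → Fin m,
        (Xᴴ * (truncSketch r p Γ s)ᴴ * (truncSketch r p Γ s * Y)) a b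
        = ∑ i : Fin r, g (s i) := by
      intro s
      rw [Matrix.mul_apply]
      refine Finset.sum_congr rfl fun i _ => ?_
      have h1 : (Xᴴ * (truncSketch r p Γ s)ᴴ) a i
          = if 0 < p (s i) ∧ ¬ Γ (s i)
            then ((1 / Real.sqrt (r * p (s i)) : ℝ) : ℂ) * conj (X (s i) a) else 0 := by
        rw [Matrix.mul_apply]
        by_cases hC : 0 < p (s i) ∧ ¬ Γ (s i)
        · rw [Finset.sum_eq_single (s i)]
          · simp [conjTranspose_apply, truncSketch, hC.1, hC.2,
              apply_ite (starRingEnd ℂ), Complex.conj_ofReal, mul_comm]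
          · intro k _ hk
            simp [conjTranspose_apply, truncSketch, hk]
          · simp
        · simp [truncSketch, hC]
      have h2 : (truncSketch r p Γ s * Y) i b
          = if 0 < p (s i) ∧ ¬ Γ (s i)
            then ((1 / Real.sqrt (r * p (s i)) : ℝ) : ℂ) * Y (s i) b else 0 := by
        rw [Matrix.mul_apply]
        by_cases hC : 0 < p (s i) ∧ ¬ Γ (s i)
        · rw [Finset.sum_eq_single (s i)]
          · simp [truncSketch, hC.1, hC.2]
          · intro k _ hk
            simp [truncSketch, hk]
          · simp
        · simp [truncSketch, hC]
      rw [h1, h2, hg]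
      by_cases hC : 0 < p (s i) ∧ ¬ Γ (s i)
      · simp only [hC, if_pos]
        have hrp : (0:ℝ) < (r:ℝ) * p (s i) := by
          have : (0:ℝ) < (r:ℝ) := by exact_mod_cast hr
          exact mul_pos this hC.1
        have hw : ((1 / Real.sqrt ((r:ℝ) * p (s i)) : ℝ) : ℂ)
            * ((1 / Real.sqrt ((r:ℝ) * p (s i)) : ℝ) : ℂ)
            = ((((r:ℝ) * p (s i))⁻¹ : ℝ) : ℂ) := by
          rw [← Complex.ofReal_mul]
          congr 1
          rw [div_mul_div_comm, one_mul, Real.mul_self_sqrt hrp.le, one_div]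
        calc ((1 / Real.sqrt (↑r * p (s i)) : ℝ) : ℂ) * conj (X (s i) a)
              * (((1 / Real.sqrt (↑r * p (s i)) : ℝ) : ℂ) * Y (s i) b)
            = (((1 / Real.sqrt ((r:ℝ) * p (s i)) : ℝ) : ℂ)
              * ((1 / Real.sqrt ((r:ℝ) * p (s i)) : ℝ) : ℂ)) * conj (X (s i) a) * Y (s i) b := by
              ring
          _ = ((((r:ℝ) * p (s i))⁻¹ : ℝ) : ℂ) * conj (X (s i) a) * Y (s i) b := by rw [hw]
      · simp [hC]
    -- expectation entry
    simp only [Matrix.sub_apply, Matrix.sum_apply, Matrix.smul_apply, smul_eq_mul]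
    have hstep : ∀ s : Fin r → Fin m,
        ((∏ i, ptilde (s i) : ℝ) : ℂ) * (Xᴴ * (truncSketch r p Γ s)ᴴ * (truncSketch r p Γ s * Y)) a b
        = (∏ i, ((ptilde (s i) : ℝ) : ℂ)) * ∑ i, g (s i) := by
      intro s; rw [hentry s]; push_cast; ring
    rw [Finset.sum_congr rfl (fun s _ => hstep s)]
    have hmarg : ∑ s : Fin r → Fin m, (∏ i, ((ptilde (s i) : ℝ) : ℂ)) * ∑ i, g (s i)
        = (r : ℂ) * ∑ j, ((ptilde j : ℝ) : ℂ) * g j := by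
      simp_rw [Finset.mul_sum]
      rw [Finset.sum_comm]
      have hw1 : ∑ j, ((ptilde j : ℝ) : ℂ) = 1 := by
        rw [← Complex.ofReal_sum]; exact_mod_cast congrArg (Complex.ofReal) hpt_sum
      rw [Finset.sum_congr rfl (fun i _ => marg r (fun j => ((ptilde j : ℝ) : ℂ)) hw1 g i)]
      rw [Finset.sum_const, Finset.card_univ, Fintype.card_fin, nsmul_eq_mul,
        Finset.mul_sum]
    rw [hmarg, Matrix.mul_apply, Finset.mul_sum, ← Finset.sum_sub_distrib]
    rw [Matrix.of_apply]
    refine Finset.sum_congr rfl fun j _ => ?_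
    by_cases hCj : 0 < p j ∧ ¬ Γ j
    · have hpj : ((p j : ℝ) : ℂ) ≠ 0 := by
        exact_mod_cast Complex.ofReal_ne_zero.mpr hCj.1.ne'
      simp only [hg, hCj, if_pos, hc, conjTranspose_apply, Complex.star_def, true_and,
        not_false_eq_true, if_true]
      push_cast
      field_simp
    · simp only [hg, hCj, if_neg, hc, conjTranspose_apply, Complex.star_def, if_false,
        Matrix.of_apply]
      push_cast [hCj]
      ring
  rw [hmat]
  -- Step 2: triangle inequality
  have hB : frobNorm (Matrix.of fun a b => ∑ j, ((c j : ℝ) : ℂ) * (conj (X j a)) * Y j b)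
      ≤ ∑ j, |c j| * rowNorm X j * rowNorm Y j := by
    have hD : (Matrix.of fun a b => ∑ j, ((c j : ℝ) : ℂ) * (conj (X j a)) * Y j b)
        = ∑ j, Matrix.of (fun a b => ((c j : ℝ) : ℂ) * (conj (X j a)) * Y j b) := by
      ext a b; simp [Matrix.sum_apply]
    rw [hD, frobNorm_eq_norm_embL, map_sum]
    calc ‖∑ j, embL n n' (Matrix.of fun a b => ((c j : ℝ) : ℂ) * (conj (X j a)) * Y j b)‖
        ≤ ∑ j, ‖embL n n' (Matrix.of fun a b => ((c j : ℝ) : ℂ) * (conj (X j a)) * Y j b)‖ :=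
          norm_sum_le _ _
      _ = ∑ j, |c j| * rowNorm X j * rowNorm Y j := by
          refine Finset.sum_congr rfl fun j _ => ?_
          rw [← frobNorm_eq_norm_embL, frobNorm_rank_one (c j) (fun a => conj (X j a)) (fun b => Y j b)]
          simp only [RCLike.norm_conj]
          rfl
  refine le_trans hB ?_
  -- Step 3: per-index bound and summation
  have hperj : ∀ j, |c j| * rowNorm X j * rowNorm Y j
      ≤ K * fX * rowNorm Y j ^ 2 / fY + |ptilde j - p j| * (φ * fX * fY / K) := by
    intro j
    have hrX := rowNorm_nonneg' X j
    have hrY := rowNorm_nonneg' Y j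
    by_cases hΓj : Γ j
    · have hcj : c j = -1 := by simp [hc, hΓj]
      rw [hcj]
      have h1 : fY * rowNorm X j ≤ K * fX * rowNorm Y j := (hΓ j).mp hΓj
      have h2 : rowNorm X j * rowNorm Y j ≤ K * fX * rowNorm Y j ^ 2 / fY := by
        rw [le_div_iff₀ hfY]
        nlinarith [mul_le_mul_of_nonneg_right h1 hrY]
      have h3 : 0 ≤ |ptilde j - p j| * (φ * fX * fY / K) :=
        mul_nonneg (abs_nonneg _) (div_nonneg (by positivity) hK0)
      calc |(-1:ℝ)| * rowNorm X j * rowNorm Y j = rowNorm X j * rowNorm Y j := by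
            rw [abs_neg, abs_one]; ring
        _ ≤ _ := by linarith
    · by_cases hpj : 0 < p j
      · have hcj : c j = (ptilde j - p j) / p j := by
          simp only [hc, hpj, hΓj, not_false_iff, and_self, if_true]
          field_simp
        rw [hcj, abs_div, abs_of_pos hpj]
        have hΓn : K * fX * rowNorm Y j < fY * rowNorm X j :=
          lt_of_not_ge (fun h => hΓj ((hΓ j).mpr h))
        have h2 : rowNorm X j ^ 2 ≤ φ * fX ^ 2 * p j := by
          have h := hp_over j
          have heq : (1/φ) * (rowNorm X j ^ 2 / fX ^ 2) = rowNorm X j ^ 2 / (φ * fX ^ 2) := by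
            field_simp
          rw [heq, div_le_iff₀ (by positivity)] at h
          linarith [h]
        have hA : K * rowNorm Y j ≤ fY * rowNorm X j / fX := by
          rw [le_div_iff₀ hfX]; nlinarith [hΓn.le]
        have hkey : rowNorm X j * rowNorm Y j * K ≤ φ * fX * fY * p j := by
          calc rowNorm X j * rowNorm Y j * K = rowNorm X j * (K * rowNorm Y j) := by ring
            _ ≤ rowNorm X j * (fY * rowNorm X j / fX) := mul_le_mul_of_nonneg_left hA hrX
            _ = fY * rowNorm X j ^ 2 / fX := by ring
            _ ≤ fY * (φ * fX ^ 2 * p j) / fX := by gcongr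
            _ = φ * fX * fY * p j := by field_simp
        by_cases hKz : K = 0
        · have hεz : ε = 0 := by
            have h0 : 2 * φ * ε ≤ 0 := by
              by_contra hlt
              push_neg at hlt
              have hpos : 0 < K := by rw [hK]; exact Real.sqrt_pos.mpr hlt
              exact absurd hKz hpos.ne'
            nlinarith [hφ0, hε0]
          have hsum0 : ∑ j', |ptilde j' - p j'| = 0 := by
            have h1 : ∑ j', |ptilde j' - p j'| ≤ 0 := by rw [hεz] at hTV; linarith
            have h2' : 0 ≤ ∑ j', |ptilde j' - p j'| :=
              Finset.sum_nonneg fun _ _ => abs_nonneg _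
            linarith
          have habs : |ptilde j - p j| = 0 := by
            have := (Finset.sum_eq_zero_iff_of_nonneg
              (fun j' _ => abs_nonneg (ptilde j' - p j'))).mp hsum0 j (Finset.mem_univ j)
            exact this
          rw [habs]
          simp only [zero_div, zero_mul, mul_zero, add_zero]
          positivity
        · have hKpos : 0 < K := lt_of_le_of_ne hK0 (Ne.symm hKz)
          have h6 : rowNorm X j * rowNorm Y j / p j ≤ φ * fX * fY / K := by
            rw [div_le_div_iff₀ hpj hKpos]; linarith [hkey]
          calc |ptilde j - p j| / p j * rowNorm X j * rowNorm Y j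
              = |ptilde j - p j| * (rowNorm X j * rowNorm Y j / p j) := by ring
            _ ≤ |ptilde j - p j| * (φ * fX * fY / K) :=
              mul_le_mul_of_nonneg_left h6 (abs_nonneg _)
            _ ≤ _ := le_add_of_nonneg_left (by positivity)
      · have hp0 : p j = 0 := le_antisymm (not_lt.mp hpj) (hp_nonneg j)
        have hrX0 : rowNorm X j = 0 := by
          have h := hp_over j
          rw [hp0] at h
          have h1 : 0 ≤ rowNorm X j ^ 2 / fX ^ 2 := by positivity
          have h3 : rowNorm X j ^ 2 / fX ^ 2 = 0 := by nlinarith [one_div_pos.mpr hφ0]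
          have h4 : rowNorm X j ^ 2 = 0 := by
            rw [div_eq_zero_iff] at h3
            rcases h3 with h3 | h3
            · exact h3
            · exact absurd h3 (by positivity)
          exact pow_eq_zero_iff two_ne_zero |>.mp h4
        have hcj : c j = -1 := by simp [hc, hpj]
        rw [hcj, hrX0]
        simp only [mul_zero, zero_mul]
        have h3 : 0 ≤ |ptilde j - p j| * (φ * fX * fY / K) :=
          mul_nonneg (abs_nonneg _) (div_nonneg (by positivity) hK0)
        have h4 : 0 ≤ K * fX * rowNorm Y j ^ 2 / fY := by positivity
        nlinarith [h3, h4]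
  calc ∑ j, |c j| * rowNorm X j * rowNorm Y j
      ≤ ∑ j, (K * fX * rowNorm Y j ^ 2 / fY + |ptilde j - p j| * (φ * fX * fY / K)) :=
        Finset.sum_le_sum fun j _ => hperj j
    _ = K * fX * fY + (∑ j, |ptilde j - p j|) * (φ * fX * fY / K) := by
        rw [Finset.sum_add_distrib, Finset.sum_mul]
        congr 1
        have hYsq : ∑ j, rowNorm Y j ^ 2 = fY ^ 2 := by
          simp_rw [rowNorm_sq_eq]; exact (frobNorm_sq_eq Y).symm
        rw [← Finset.sum_div, ← Finset.mul_sum, hYsq]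
        field_simp
    _ ≤ K * fX * fY + (2 * ε) * (φ * fX * fY / K) := by
        have h1 : ∑ j, |ptilde j - p j| ≤ 2 * ε := by linarith
        have h2 : 0 ≤ φ * fX * fY / K := by positivity
        nlinarith [h1, h2]
    _ = 2 * K * fX * fY := by
        have hdiv : 2 * ε * φ / K = K := by
          by_cases hεz : ε = 0
          · subst hεz; simp [hK]
          · have hεpos : 0 < ε := lt_of_le_of_ne hε0 (Ne.symm hεz)
            have hKpos : 0 < K := Real.sqrt_pos.mpr (by positivity)
            have hKK : K * K = 2 * φ * ε := Real.mul_self_sqrt (by positivity)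
            field_simp
            nlinarith [hKK]
        have : K * fX * fY + 2 * ε * (φ * fX * fY / K)
            = K * fX * fY + (2 * ε * φ / K) * (fX * fY) := by ring
        rw [this, hdiv]; ring
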